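/- arXiv:1309.1999 — 3 statements merged into one kernel-verified Lean document; each statement's English description precedes it below -/
import Mathlib

section
/- Let p ≥ 2 be an integer. Then in ℤ[t]: (t^p - 1)·(∑_{i=0}^{p-2}(t^{(2p-1)i} + t^{(2p-1)i + p}) - ∑_{i=0}^{2(p-2)} t^{ip+1}) = (t - 1)·∑_{i=0}^{p-1} t^{(2p-1)i}. -/
open Polynomial Finset

theorem torus_knot_2pm1_alexander_poly_identity (p : ℕ) (hp : 2 ≤ p) :
    ((X : ℤ[X]) ^ p - 1) *
        (∑ i ∈ range (p - 1), ((X : ℤ[X]) ^ ((2 * p - 1) * i) + X ^ ((2 * p - 1) * i + p)) -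
          ∑ i ∈ range (2 * (p - 2) + 1), X ^ (i * p + 1)) =
      ((X : ℤ[X]) - 1) * ∑ i ∈ range p, X ^ ((2 * p - 1) * i) := by
  obtain ⟨n, rfl⟩ := Nat.exists_eq_add_of_le hp
  simp only [show 2 + n - 1 = n + 1 by omega, show 2 * (2 + n) - 1 = 2 * n + 3 by omega,
    show 2 * (2 + n - 2) + 1 = 2 * n + 1 by omega]
  set S : ℤ[X] := ∑ i ∈ range (n + 1), X ^ ((2 * n + 3) * i) with hS
  set T : ℤ[X] := ∑ i ∈ range (2 * n + 1), X ^ ((2 + n) * i) with hT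
  have h1 : ((X : ℤ[X]) ^ (2 * n + 3) - 1) * S = X ^ ((2 * n + 3) * (n + 1)) - 1 := by
    rw [hS, mul_comm]
    simp only [pow_mul]
    exact geom_sum_mul _ _
  have h2 : ((X : ℤ[X]) ^ (2 + n) - 1) * T = X ^ ((2 + n) * (2 * n + 1)) - 1 := by
    rw [hT, mul_comm]
    simp only [pow_mul]
    exact geom_sum_mul _ _
  have e1 : ∑ i ∈ range (n + 1), ((X : ℤ[X]) ^ ((2 * n + 3) * i) + X ^ ((2 * n + 3) * i + (2 + n)))
      = S + X ^ (2 + n) * S := by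
    rw [sum_add_distrib, hS, mul_sum]
    congr 1
    refine sum_congr rfl fun i _ => ?_
    rw [pow_add, mul_comm]
  have e2 : ∑ i ∈ range (2 * n + 1), (X : ℤ[X]) ^ (i * (2 + n) + 1) = X * T := by
    rw [hT, mul_sum]
    refine sum_congr rfl fun i _ => ?_
    rw [pow_add, pow_one, mul_comm ((2:ℕ) + n) i, mul_comm]
  have e3 : ∑ i ∈ range (2 + n), (X : ℤ[X]) ^ ((2 * n + 3) * i)
      = S + X ^ ((2 * n + 3) * (n + 1)) := by
    rw [show 2 + n = (n + 1) + 1 by omega, sum_range_succ, hS]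
  have h3 : (X : ℤ[X]) ^ (2 + n) * X ^ (2 + n) = X * X ^ (2 * n + 3) := by
    rw [← pow_add, ← pow_succ']
    congr 1
    omega
  have h4 : (X : ℤ[X]) * X ^ ((2 + n) * (2 * n + 1)) = X ^ ((2 * n + 3) * (n + 1)) := by
    rw [← pow_succ']
    congr 1
    ring
  rw [e1, e2, e3]
  linear_combination S * h3 - X * h2 + X * h1 - h4
end

section
/- For integers n ≥ 2 and p ≥ 2, the following identity holds in ℤ[t]: (∑_{i=0}^{(p²+p)(n-1)} t^{in})·(∑_{k=0}^{p-1} t^{kpn} - ∑_{k=0}^{p-2} t^{kn(p+1)+n}) = ∑_{k=0}^{p-2} ∑_{i=0}^{k} t^{in+knp} - ∑_{k=0}^{p-2} ∑_{i=0}^{k} t^{knp+(k+1)n+n(p²+p)(n-1)-in} + ∑_{i=0}^{(p²+p)(n-1)} t^{(p-1)np+in}. -/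
open Polynomial Finset

private lemma geom_cut {R : Type*} [CommRing R] (Y : R) (M k : ℕ) :
    (∑ j ∈ range (M + 1), Y ^ j) * (1 - Y ^ (k + 1)) =
      ∑ i ∈ range (k + 1), Y ^ i - ∑ i ∈ range (k + 1), Y ^ (M + 1 + i) := by
  have h1 := geom_sum_mul Y (M + 1)
  have h2 := geom_sum_mul Y (k + 1)
  have h3 : ∑ i ∈ range (k + 1), Y ^ (M + 1 + i)
      = Y ^ (M + 1) * ∑ i ∈ range (k + 1), Y ^ i := by
    rw [Finset.mul_sum]
    exact Finset.sum_congr rfl fun i _ => (pow_add Y (M + 1) i)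
  rw [h3]
  linear_combination (- ∑ i ∈ range (k + 1), Y ^ i) * h1 +
    (∑ j ∈ range (M + 1), Y ^ j) * h2

private lemma keyY {R : Type*} [CommRing R] (Y : R) (q M : ℕ) :
    (∑ i ∈ range (M + 1), Y ^ i) *
        (∑ k ∈ range (q + 2), Y ^ (k * (q + 2)) -
          ∑ k ∈ range (q + 1), Y ^ (k * (q + 3) + 1)) =
      ∑ k ∈ range (q + 1), ∑ i ∈ range (k + 1), Y ^ (i + k * (q + 2)) -
        ∑ k ∈ range (q + 1), ∑ i ∈ range (k + 1), Y ^ (k * (q + 2) + k + 1 + M - i) +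
        ∑ i ∈ range (M + 1), Y ^ ((q + 1) * (q + 2) + i) := by
  set S := ∑ i ∈ range (M + 1), Y ^ i with hS
  rw [sum_range_succ]
  have hthird : S * Y ^ ((q + 1) * (q + 2)) = ∑ i ∈ range (M + 1), Y ^ ((q + 1) * (q + 2) + i) := by
    rw [hS, Finset.sum_mul]
    exact Finset.sum_congr rfl fun i _ => by rw [← pow_add, add_comm]
  have hmain : S * (∑ k ∈ range (q + 1), Y ^ (k * (q + 2)) -
        ∑ k ∈ range (q + 1), Y ^ (k * (q + 3) + 1)) =
      ∑ k ∈ range (q + 1), ∑ i ∈ range (k + 1), Y ^ (i + k * (q + 2)) -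
        ∑ k ∈ range (q + 1), ∑ i ∈ range (k + 1), Y ^ (k * (q + 2) + k + 1 + M - i) := by
    rw [← Finset.sum_sub_distrib, Finset.mul_sum, ← Finset.sum_sub_distrib]
    refine Finset.sum_congr rfl fun k _ => ?_
    have h2 : ∑ i ∈ range (k + 1), Y ^ (k * (q + 2) + k + 1 + M - i) =
        Y ^ (k * (q + 2)) * ∑ i ∈ range (k + 1), Y ^ (M + 1 + i) := by
      calc ∑ i ∈ range (k + 1), Y ^ (k * (q + 2) + k + 1 + M - i)
          = ∑ j ∈ range (k + 1), Y ^ (k * (q + 2) + (M + 1 + (k + 1 - 1 - j))) := by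
            refine Finset.sum_congr rfl fun j hj => ?_
            have hj' : j ≤ k := by simpa [Nat.lt_succ_iff] using hj
            congr 1
            omega
        _ = ∑ j ∈ range (k + 1), Y ^ (k * (q + 2) + (M + 1 + j)) :=
            Finset.sum_range_reflect (fun j => Y ^ (k * (q + 2) + (M + 1 + j))) (k + 1)
        _ = Y ^ (k * (q + 2)) * ∑ i ∈ range (k + 1), Y ^ (M + 1 + i) := by
            rw [Finset.mul_sum]
            exact Finset.sum_congr rfl fun i _ => pow_add Y _ _
    have h1 : ∑ i ∈ range (k + 1), Y ^ (i + k * (q + 2)) =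
        Y ^ (k * (q + 2)) * ∑ i ∈ range (k + 1), Y ^ i := by
      rw [Finset.mul_sum]
      exact Finset.sum_congr rfl fun i _ => by rw [← pow_add, add_comm]
    have hpow : Y ^ (k * (q + 3) + 1) = Y ^ (k * (q + 2)) * Y ^ (k + 1) := by
      rw [← pow_add]
      congr 1
    have hc := geom_cut Y M k
    rw [h1, h2, ← mul_sub, ← hc, hpow, hS]
    ring
  linear_combination hmain + hthird

theorem big_cable_telescoping_identity (n p : ℕ) (hn : 2 ≤ n) (hp : 2 ≤ p) :
    (∑ i ∈ range ((p ^ 2 + p) * (n - 1) + 1), (X : ℤ[X]) ^ (i * n)) *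
        (∑ k ∈ range p, (X : ℤ[X]) ^ (k * p * n) -
          ∑ k ∈ range (p - 1), X ^ (k * n * (p + 1) + n)) =
      ∑ k ∈ range (p - 1), ∑ i ∈ range (k + 1), (X : ℤ[X]) ^ (i * n + k * n * p) -
        ∑ k ∈ range (p - 1), ∑ i ∈ range (k + 1),
          (X : ℤ[X]) ^ (k * n * p + (k + 1) * n + n * (p ^ 2 + p) * (n - 1) - i * n) +
        ∑ i ∈ range ((p ^ 2 + p) * (n - 1) + 1), X ^ ((p - 1) * n * p + i * n) := by
  obtain ⟨q, rfl⟩ : ∃ q, p = q + 2 := ⟨p - 2, by omega⟩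
  simp only [show q + 2 - 1 = q + 1 from rfl]
  set M := ((q + 2) ^ 2 + (q + 2)) * (n - 1) with hMdef
  have key := keyY ((X : ℤ[X]) ^ n) q M
  have eq1 : ∑ i ∈ range (M + 1), (X : ℤ[X]) ^ (i * n) =
      ∑ i ∈ range (M + 1), ((X : ℤ[X]) ^ n) ^ i :=
    Finset.sum_congr rfl fun i _ => by rw [← pow_mul']
  have eq2 : ∑ k ∈ range (q + 2), (X : ℤ[X]) ^ (k * (q + 2) * n) =
      ∑ k ∈ range (q + 2), ((X : ℤ[X]) ^ n) ^ (k * (q + 2)) :=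
    Finset.sum_congr rfl fun k _ => by rw [← pow_mul']
  have eq3 : ∑ k ∈ range (q + 1), (X : ℤ[X]) ^ (k * n * (q + 2 + 1) + n) =
      ∑ k ∈ range (q + 1), ((X : ℤ[X]) ^ n) ^ (k * (q + 3) + 1) :=
    Finset.sum_congr rfl fun k _ => by rw [← pow_mul']; congr 1; ring
  have eq4 : ∑ k ∈ range (q + 1), ∑ i ∈ range (k + 1), (X : ℤ[X]) ^ (i * n + k * n * (q + 2)) =
      ∑ k ∈ range (q + 1), ∑ i ∈ range (k + 1), ((X : ℤ[X]) ^ n) ^ (i + k * (q + 2)) :=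
    Finset.sum_congr rfl fun k _ => Finset.sum_congr rfl fun i _ => by
      rw [← pow_mul']; congr 1; ring
  have eq5 : ∑ k ∈ range (q + 1), ∑ i ∈ range (k + 1),
        (X : ℤ[X]) ^ (k * n * (q + 2) + (k + 1) * n + n * ((q + 2) ^ 2 + (q + 2)) * (n - 1) - i * n) =
      ∑ k ∈ range (q + 1), ∑ i ∈ range (k + 1), ((X : ℤ[X]) ^ n) ^ (k * (q + 2) + k + 1 + M - i) :=
    Finset.sum_congr rfl fun k _ => Finset.sum_congr rfl fun i _ => by
      rw [← pow_mul', Nat.sub_mul]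
      congr 2
      rw [hMdef]
      ring
  have eq6 : ∑ i ∈ range (M + 1), (X : ℤ[X]) ^ ((q + 1) * n * (q + 2) + i * n) =
      ∑ i ∈ range (M + 1), ((X : ℤ[X]) ^ n) ^ ((q + 1) * (q + 2) + i) :=
    Finset.sum_congr rfl fun i _ => by rw [← pow_mul']; congr 1; ring
  rw [eq1, eq2, eq3, eq4, eq5, eq6]
  exact key
end

section
/- For integers p, q ≥ 2 coprime, the rational function (t-1)(t^{pq}-1)/((t^p-1)(t^q-1)) is a polynomial in ℤ[t] of degree (p-1)(q-1). -/
open Polynomial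

theorem torus_knot_alexander_is_polynomial (p q : ℕ) (hp : 2 ≤ p) (hq : 2 ≤ q)
    (hpq : Nat.Coprime p q) :
    ∃ f : ℤ[X], ((X : ℤ[X]) - 1) * (X ^ (p * q) - 1) = f * ((X ^ p - 1) * (X ^ q - 1)) ∧
      f.natDegree = (p - 1) * (q - 1) := by
  have hp0 : 0 < p := by omega
  have hq0 : 0 < q := by omega
  have hpq0 : 0 < p * q := Nat.mul_pos hp0 hq0
  set S : Finset ℕ := p.divisors ∪ q.divisors with hS
  have hinter : p.divisors ∩ q.divisors = {1} := by
    ext d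
    simp only [Finset.mem_inter, Nat.mem_divisors, Finset.mem_singleton]
    constructor
    · rintro ⟨⟨hdp, -⟩, ⟨hdq, -⟩⟩
      have := Nat.dvd_gcd hdp hdq
      rwa [Nat.Coprime.gcd_eq_one hpq, Nat.dvd_one] at this
    · rintro rfl
      exact ⟨⟨one_dvd _, hp0.ne'⟩, ⟨one_dvd _, hq0.ne'⟩⟩
  have hsub : S ⊆ (p * q).divisors := by
    intro d hd
    rw [hS, Finset.mem_union] at hd
    rw [Nat.mem_divisors]
    rcases hd with hd | hd
    · exact ⟨(Nat.mem_divisors.mp hd).1.trans (dvd_mul_right p q), hpq0.ne'⟩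
    · exact ⟨(Nat.mem_divisors.mp hd).1.trans (dvd_mul_left q p), hpq0.ne'⟩
  -- key product identities
  have hprodS : (∏ d ∈ S, cyclotomic d ℤ) * ((X : ℤ[X]) - 1)
      = (X ^ p - 1) * (X ^ q - 1) := by
    have := Finset.prod_union_inter (s₁ := p.divisors) (s₂ := q.divisors)
      (f := fun d => cyclotomic d ℤ)
    rw [hinter, Finset.prod_singleton, cyclotomic_one,
      prod_cyclotomic_eq_X_pow_sub_one hp0, prod_cyclotomic_eq_X_pow_sub_one hq0] at this
    rw [hS, this]
  refine ⟨∏ d ∈ (p * q).divisors \ S, cyclotomic d ℤ, ?_, ?_⟩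
  · have hsd : (∏ d ∈ (p * q).divisors \ S, cyclotomic d ℤ) * (∏ d ∈ S, cyclotomic d ℤ)
        = ∏ d ∈ (p * q).divisors, cyclotomic d ℤ := Finset.prod_sdiff hsub
    calc ((X : ℤ[X]) - 1) * (X ^ (p * q) - 1)
        = ((X : ℤ[X]) - 1) * ((∏ d ∈ (p * q).divisors \ S, cyclotomic d ℤ)
            * (∏ d ∈ S, cyclotomic d ℤ)) := by
          rw [hsd, prod_cyclotomic_eq_X_pow_sub_one hpq0]
      _ = (∏ d ∈ (p * q).divisors \ S, cyclotomic d ℤ)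
            * ((∏ d ∈ S, cyclotomic d ℤ) * ((X : ℤ[X]) - 1)) := by ring
      _ = _ := by rw [hprodS]
  · -- degree computation
    have hXp : (X : ℤ[X]) ^ p - 1 ≠ 0 := by
      have : ((X : ℤ[X]) ^ p - 1).Monic := by
        simpa using monic_X_pow_sub_C (1 : ℤ) hp0.ne'
      exact this.ne_zero
    have hXq : (X : ℤ[X]) ^ q - 1 ≠ 0 := by
      have : ((X : ℤ[X]) ^ q - 1).Monic := by
        simpa using monic_X_pow_sub_C (1 : ℤ) hq0.ne'
      exact this.ne_zero
    have hX1 : ((X : ℤ[X]) - 1) ≠ 0 := by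
      have : ((X : ℤ[X]) - 1).Monic := by
        simpa using monic_X_pow_sub_C (1 : ℤ) one_ne_zero
      exact this.ne_zero
    have hf : (∏ d ∈ (p * q).divisors \ S, cyclotomic d ℤ) ≠ 0 := by
      apply Finset.prod_ne_zero_iff.mpr
      intro d hd
      exact cyclotomic_ne_zero d ℤ
    have hXpq : (X : ℤ[X]) ^ (p * q) - 1 ≠ 0 := by
      have : ((X : ℤ[X]) ^ (p * q) - 1).Monic := by
        simpa using monic_X_pow_sub_C (1 : ℤ) hpq0.ne'
      exact this.ne_zero
    have hdXp : ((X : ℤ[X]) ^ p - 1).natDegree = p := by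
      simpa using natDegree_X_pow_sub_C (n := p) (r := (1 : ℤ))
    have hdXq : ((X : ℤ[X]) ^ q - 1).natDegree = q := by
      simpa using natDegree_X_pow_sub_C (n := q) (r := (1 : ℤ))
    have hdXpq : ((X : ℤ[X]) ^ (p * q) - 1).natDegree = p * q := by
      simpa using natDegree_X_pow_sub_C (n := p * q) (r := (1 : ℤ))
    have hdX1 : ((X : ℤ[X]) - 1).natDegree = 1 := by
      simpa using natDegree_X_pow_sub_C (n := 1) (r := (1 : ℤ))
    have hsd : (∏ d ∈ (p * q).divisors \ S, cyclotomic d ℤ) * (∏ d ∈ S, cyclotomic d ℤ)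
        = ∏ d ∈ (p * q).divisors, cyclotomic d ℤ := Finset.prod_sdiff hsub
    have heq : ((X : ℤ[X]) - 1) * (X ^ (p * q) - 1)
        = (∏ d ∈ (p * q).divisors \ S, cyclotomic d ℤ) * ((X ^ p - 1) * (X ^ q - 1)) := by
      calc ((X : ℤ[X]) - 1) * (X ^ (p * q) - 1)
          = ((X : ℤ[X]) - 1) * ((∏ d ∈ (p * q).divisors \ S, cyclotomic d ℤ)
              * (∏ d ∈ S, cyclotomic d ℤ)) := by
            rw [hsd, prod_cyclotomic_eq_X_pow_sub_one hpq0]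
        _ = (∏ d ∈ (p * q).divisors \ S, cyclotomic d ℤ)
              * ((∏ d ∈ S, cyclotomic d ℤ) * ((X : ℤ[X]) - 1)) := by ring
        _ = _ := by rw [hprodS]
    have hdeg := congrArg natDegree heq
    rw [natDegree_mul hX1 hXpq, natDegree_mul hf (mul_ne_zero hXp hXq),
      natDegree_mul hXp hXq, hdXp, hdXq, hdXpq, hdX1] at hdeg
    have hkey : p * q = (p - 1) * (q - 1) + (p - 1) + (q - 1) + 1 := by
      obtain ⟨a, rfl⟩ : ∃ a, p = a + 1 := ⟨p - 1, by omega⟩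
      obtain ⟨b, rfl⟩ : ∃ b, q = b + 1 := ⟨q - 1, by omega⟩
      simp only [Nat.add_sub_cancel]
      ring
    omega
end
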